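/- Let u ∈ L^∞(ℝ) be non-decreasing, odd, and convex on (−∞,0), and let r > 0. Then for all R > r, ∫_{|x|>R} ∫_{|z|≤r} |u(x+z) − u(x) − u_x(x)z| |z|^{−2} dz dx ≤ 4r ‖u‖_∞ (R − r)^{−1}. -/

import Mathlib

open MeasureTheory Set

section aux
variable {u : ℝ → ℝ} {M : ℝ}

lemma aux_u0 (hodd : ∀ x, u (-x) = -u x) : u 0 = 0 := by
  have := hodd 0; simp at this; linarith

lemma aux_concave (hodd : ∀ x, u (-x) = -u x)
    (hconv : ConvexOn ℝ (Set.Iio 0) u) : ConcaveOn ℝ (Set.Ioi 0) u := by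
  refine ⟨convex_Ioi 0, ?_⟩
  intro x hx y hy a b ha hb hab
  have hx' : -x ∈ Set.Iio 0 := by simp [Set.mem_Iio]; exact hx
  have hy' : -y ∈ Set.Iio 0 := by simp [Set.mem_Iio]; exact hy
  have h := hconv.2 hx' hy' ha hb hab
  simp only [smul_eq_mul] at h ⊢
  have e1 : a * -x + b * -y = -(a * x + b * y) := by ring
  rw [e1, hodd, hodd, hodd] at h
  linarith

lemma aux_slope (hodd : ∀ x, u (-x) = -u x) (hcont : Continuous u)
    (hconv : ConvexOn ℝ (Set.Iio 0) u) {t z : ℝ} (ht : 0 < t) (hz : 0 < z) :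
    u (t + z) ≤ u t + z * u t / t := by
  have hconc := aux_concave hodd hconv
  have htz : 0 < t + z := by linarith
  set lam := z / (t + z) with hlam
  have hlam0 : 0 < lam := div_pos hz htz
  have hlam1 : lam < 1 := (div_lt_one htz).2 (by linarith)
  -- for ε > 0 : lam * u ε + (1-lam) * u (t+z) ≤ u (t + lam * ε)
  have key : ∀ ε : ℝ, 0 < ε → lam * u ε + (1 - lam) * u (t + z) ≤ u (t + lam * ε) := by
    intro ε hε
    have h := hconc.2 (Set.mem_Ioi.2 hε) (Set.mem_Ioi.2 htz)
      (show (0:ℝ) ≤ lam from hlam0.le) (show (0:ℝ) ≤ 1 - lam by linarith)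
      (show lam + (1 - lam) = 1 by ring)
    simp only [smul_eq_mul] at h
    have e : lam * ε + (1 - lam) * (t + z) = t + lam * ε := by
      rw [hlam]; field_simp; ring
    rwa [e] at h
  -- take limit ε → 0⁺
  have hlim : (1 - lam) * u (t + z) ≤ u t := by
    have h1 : Filter.Tendsto (fun ε : ℝ => lam * u ε + (1 - lam) * u (t + z))
        (nhdsWithin 0 (Set.Ioi 0)) (nhds ((1 - lam) * u (t + z))) := by
      have : Filter.Tendsto (fun ε : ℝ => lam * u ε + (1 - lam) * u (t + z))
          (nhds 0) (nhds (lam * u 0 + (1 - lam) * u (t + z))) := by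
        exact ((continuous_const.mul hcont).add continuous_const).tendsto 0
      rw [aux_u0 hodd] at this
      simpa using this.mono_left nhdsWithin_le_nhds
    have h2 : Filter.Tendsto (fun ε : ℝ => u (t + lam * ε))
        (nhdsWithin 0 (Set.Ioi 0)) (nhds (u t)) := by
      have : Filter.Tendsto (fun ε : ℝ => u (t + lam * ε)) (nhds 0) (nhds (u (t + lam * 0))) := by
        exact (hcont.comp (continuous_const.add (continuous_const.mul continuous_id))).tendsto 0
      simpa using this.mono_left nhdsWithin_le_nhds
    refine le_of_tendsto_of_tendsto h1 h2 ?_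
    filter_upwards [self_mem_nhdsWithin] with ε hε using key ε hε
  -- rearrange
  have h3 : (t / (t + z)) * u (t + z) ≤ u t := by
    have : 1 - lam = t / (t + z) := by rw [hlam]; field_simp; ring
    rwa [this] at hlim
  rw [div_mul_eq_mul_div, div_le_iff₀ htz] at h3
  have ht' : t ≠ 0 := ne_of_gt ht
  have e : u t + z * u t / t = (u t * (t + z)) / t := by field_simp
  rw [e, le_div_iff₀ ht]
  nlinarith [h3]
end aux

section aux2
variable {u : ℝ → ℝ}

-- tangent line above graph for concave function, at a differentiability point
lemma aux_tangent (hconc : ConcaveOn ℝ (Set.Ioi 0) u) {x y : ℝ} (hx : 0 < x) (hy : 0 < y)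
    (hd : DifferentiableAt ℝ u x) : u y ≤ u x + deriv u x * (y - x) := by
  rcases lt_trichotomy x y with h | h | h
  · have := hconc.slope_le_deriv (Set.mem_Ioi.2 hx) (Set.mem_Ioi.2 hy) h hd
    rw [slope_def_field, div_le_iff₀ (by linarith : (0:ℝ) < y - x)] at this
    · nlinarith [this]
  · subst h; simp
  · have := hconc.deriv_le_slope (Set.mem_Ioi.2 hy) (Set.mem_Ioi.2 hx) h hd
    rw [slope_def_field, le_div_iff₀ (by linarith : (0:ℝ) < x - y)] at this
    nlinarith [this]

-- deriv symmetry for odd functions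
lemma aux_deriv_neg (hodd : ∀ x, u (-x) = -u x) {y : ℝ} (hd : DifferentiableAt ℝ u y) :
    HasDerivAt u (deriv u y) (-y) := by
  have h1 : HasDerivAt u (deriv u y) y := hd.hasDerivAt
  have h2 : HasDerivAt (fun w => u (-w)) (deriv u y * (-1)) (-y) := by
    have hneg : HasDerivAt (fun w : ℝ => -w) (-1) (-y) := by
      exact hasDerivAt_neg' (-y)
    exact HasDerivAt.comp (-y) (by simpa using h1) hneg
  have h3 : (fun w => u (-w)) = fun w => -u w := funext fun w => hodd w
  rw [h3] at h2
  have h4 := h2.neg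
  have h5 : (-fun w => -u w) = u := by funext w; simp
  rw [h5] at h4
  simpa using h4

lemma aux_bound_pos (hodd : ∀ x, u (-x) = -u x) (hconv : ConvexOn ℝ (Set.Iio 0) u)
    {x z r : ℝ} (hzr : |z| ≤ r) (hx : r < x)
    (hd : DifferentiableAt ℝ u x) :
    |u (x + z) - u x - deriv u x * z| ≤ 2 * u x - u (x + z) - u (x - z) := by
  have hconc := aux_concave hodd hconv
  have h0r : 0 ≤ r := le_trans (abs_nonneg z) hzr
  have hx0 : 0 < x := lt_of_le_of_lt h0r hx
  have hz1 : -r ≤ z := neg_le_of_abs_le hzr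
  have hz2 : z ≤ r := le_of_abs_le hzr
  have h1 : u (x + z) ≤ u x + deriv u x * z := by
    have := aux_tangent hconc hx0 (by linarith : 0 < x + z) hd
    simpa using this
  have h2 : u (x - z) ≤ u x - deriv u x * z := by
    have := aux_tangent hconc hx0 (by linarith : 0 < x - z) hd
    have e : x - z - x = -z := by ring
    rw [e] at this; linarith
  rw [abs_le]; constructor <;> nlinarith

lemma aux_bound_neg (hodd : ∀ x, u (-x) = -u x) (hconv : ConvexOn ℝ (Set.Iio 0) u)
    {x z r : ℝ} (hzr : |z| ≤ r) (hx : x < -r)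
    (hd : DifferentiableAt ℝ u (-x)) :
    |u (x + z) - u x - deriv u x * z| ≤ |2 * u x - u (x + z) - u (x - z)| := by
  set y := -x with hy
  have hyx : x = -y := by rw [hy]; ring
  have hry : r < y := by rw [hy]; linarith
  have hds : HasDerivAt u (deriv u y) x := by rw [hyx]; exact aux_deriv_neg hodd hd
  have hdx : deriv u x = deriv u y := hds.deriv
  have hz' : |(-z)| ≤ r := by rwa [abs_neg]
  have key := aux_bound_pos hodd hconv hz' hry hd
  have e1 : u (x + z) = -u (y - z) := by
    rw [hyx, show -y + z = -(y - z) by ring, hodd]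
  have e2 : u (x - z) = -u (y + z) := by
    rw [hyx, show -y - z = -(y + z) by ring, hodd]
  have e3 : u x = -u y := by rw [hyx, hodd]
  have e4 : y + -z = y - z := by ring
  have e5 : y - -z = y + z := by ring
  rw [e4, e5] at key
  rw [e1, e3, hdx]
  have lhs_eq : |-u (y - z) - -u y - deriv u y * z| = |u (y - z) - u y - deriv u y * (-z)| := by
    rw [← abs_neg]; congr 1; ring
  rw [lhs_eq]
  calc |u (y - z) - u y - deriv u y * (-z)| ≤ 2 * u y - u (y - z) - u (y + z) := key
    _ ≤ |2 * u y - u (y - z) - u (y + z)| := le_abs_self _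
    _ = |2 * (-u y) - -u (y - z) - -u (y + z)| := by rw [← abs_neg]; congr 1; ring
    _ = |2 * (-u y) - -u (y - z) - u (x - z)| := by rw [e2]

end aux2
section aux3
variable {u : ℝ → ℝ} {M : ℝ}

lemma aux_claimA (hbdd : ∀ x, |u x| ≤ M) (hmono : Monotone u) (hodd : ∀ x, u (-x) = -u x)
    (hconv : ConvexOn ℝ (Set.Iio 0) u) (hcont : Continuous u)
    {r R w : ℝ} (hr : 0 < r) (hR : r < R) (hw0 : 0 < w) (hwr : w ≤ r) :
    ∫⁻ x in Set.Ioi R, ENNReal.ofReal (|2 * u x - u (x + w) - u (x - w)|) ≤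
      ENNReal.ofReal (w ^ 2 * (M / (R - r))) := by
  have hconc := aux_concave hodd hconv
  have hu0 := aux_u0 hodd
  have hM0 : 0 ≤ M := le_trans (abs_nonneg _) (hbdd 0)
  have hRr : 0 < R - r := by linarith
  set D : ℝ → ℝ := fun x => 2 * u x - u (x + w) - u (x - w) with hD
  have hDcont : Continuous D := by
    apply Continuous.sub
    apply Continuous.sub
    · exact continuous_const.mul hcont
    · exact hcont.comp (continuous_id.add continuous_const)
    · exact hcont.comp (continuous_id.sub continuous_const)
  have hDnn : ∀ x ∈ Set.Ioi R, 0 ≤ D x := by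
    intro x hx
    have hx' : R < x := hx
    have h1 : (0:ℝ) < x - w := by linarith
    have h2 : (0:ℝ) < x + w := by linarith
    have := hconc.2 (Set.mem_Ioi.2 h1) (Set.mem_Ioi.2 h2)
      (show (0:ℝ) ≤ 1/2 by norm_num) (show (0:ℝ) ≤ 1/2 by norm_num)
      (show (1:ℝ)/2 + 1/2 = 1 by norm_num)
    simp only [smul_eq_mul] at this
    have e : 1/2 * (x - w) + 1/2 * (x + w) = x := by ring
    rw [e] at this
    simp only [hD]; linarith
  -- replace |D| by D
  have habs : ∫⁻ x in Set.Ioi R, ENNReal.ofReal (|2 * u x - u (x + w) - u (x - w)|) =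
      ∫⁻ x in Set.Ioi R, ENNReal.ofReal (D x) := by
    apply setLIntegral_congr_fun measurableSet_Ioi
    exact fun x hx => by rw [abs_of_nonneg (hDnn x hx)]
  rw [habs]
  set C := ENNReal.ofReal (w ^ 2 * (M / (R - r))) with hC
  -- bound on each Ioc R b, R ≤ b
  have hIocBound : ∀ b : ℝ, R ≤ b → ∫⁻ x in Set.Ioc R b, ENNReal.ofReal (D x) ≤ C := by
    intro b hb
    have hInt : ∀ a c : ℝ, IntervalIntegrable u volume a c :=
      fun a c => hcont.intervalIntegrable a c
    have hIntD : ∀ a c : ℝ, IntervalIntegrable D volume a c :=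
      fun a c => hDcont.intervalIntegrable a c
    have hnn : 0 ≤ᵐ[volume.restrict (Set.Ioc R b)] D :=
      (ae_restrict_iff' measurableSet_Ioc).2 (ae_of_all _ fun x hx => hDnn x hx.1)
    have step1 : ∫⁻ x in Set.Ioc R b, ENNReal.ofReal (D x) =
        ENNReal.ofReal (∫ x in Set.Ioc R b, D x) :=
      (ofReal_integral_eq_lintegral_ofReal (hIntD R b).1 hnn).symm
    have step2 : ∫ x in Set.Ioc R b, D x = ∫ x in R..b, D x :=
      (intervalIntegral.integral_of_le hb).symm
    set J : ℝ → ℝ := fun t => ∫ s in (0:ℝ)..t, u s with hJdef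
    have hJ : ∀ a c : ℝ, (∫ s in a..c, u s) = J c - J a := by
      intro a c
      have := intervalIntegral.integral_add_adjacent_intervals (hInt 0 a) (hInt a c)
      simp only [hJdef]; linarith
    have hcw : Continuous fun t : ℝ => u (t + w) := hcont.comp (continuous_add_right w)
    have hcw' : Continuous fun t : ℝ => u (t - w) := hcont.comp (continuous_sub_right w)
    have hIw : IntervalIntegrable (fun x => u (x + w)) volume R b :=
      hcw.intervalIntegrable R b
    have hIw' : IntervalIntegrable (fun x => u (x - w)) volume R b :=
      hcw'.intervalIntegrable R b
    have compute : (∫ x in R..b, D x) =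
        (J (R+w) - 2 * J R + J (R-w)) - (J (b+w) - 2 * J b + J (b-w)) := by
      have e1 : (∫ x in R..b, D x) = 2 * (∫ x in R..b, u x)
          - (∫ x in R..b, u (x + w)) - (∫ x in R..b, u (x - w)) := by
        rw [show D = fun x => (2 * u x - u (x + w)) - u (x - w) from rfl]
        rw [intervalIntegral.integral_sub (((hInt R b).const_mul 2).sub hIw) hIw',
          intervalIntegral.integral_sub ((hInt R b).const_mul 2) hIw,
          intervalIntegral.integral_const_mul]
      rw [e1, intervalIntegral.integral_comp_add_right u w,
        intervalIntegral.integral_comp_sub_right u w,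
        hJ R b, hJ (R+w) (b+w), hJ (R-w) (b-w)]
      ring
    -- A and B
    have hIA : IntervalIntegrable (fun t => u (t + w) - u t) volume (R - w) R :=
      (hcw.sub hcont).intervalIntegrable _ _
    have eA : (∫ t in (R-w)..R, (u (t + w) - u t)) = J (R+w) - 2 * J R + J (R-w) := by
      rw [intervalIntegral.integral_sub (hcw.intervalIntegrable _ _)
        (hInt _ _), intervalIntegral.integral_comp_add_right u w,
        hJ (R-w+w) (R+w), hJ (R-w) R]
      have : R - w + w = R := by ring
      rw [this]; ring
    have eB : (∫ t in (b-w)..b, (u (t + w) - u t)) = J (b+w) - 2 * J b + J (b-w) := by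
      rw [intervalIntegral.integral_sub (hcw.intervalIntegrable _ _)
        (hInt _ _), intervalIntegral.integral_comp_add_right u w,
        hJ (b-w+w) (b+w), hJ (b-w) b]
      have : b - w + w = b := by ring
      rw [this]; ring
    have hB : 0 ≤ ∫ t in (b-w)..b, (u (t + w) - u t) :=
      intervalIntegral.integral_nonneg (by linarith)
        (fun t _ => sub_nonneg.2 (hmono (by linarith)))
    have hA : (∫ t in (R-w)..R, (u (t + w) - u t)) ≤ w * (w * M / (R - r)) := by
      have hptwise : ∀ t ∈ Set.Icc (R-w) R, u (t + w) - u t ≤ w * M / (R - r) := by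
        intro t ht
        have ht1 : R - w ≤ t := ht.1
        have ht0 : 0 < t := by linarith
        have hs := aux_slope hodd hcont hconv ht0 hw0
        have hutM : u t ≤ M := le_of_abs_le (hbdd t)
        have hut0 : 0 ≤ u t := hu0 ▸ hmono ht0.le
        have : w * u t / t ≤ w * M / (R - r) := by
          apply div_le_div₀ (by positivity) (by nlinarith) hRr (by linarith)
        linarith
      calc (∫ t in (R-w)..R, (u (t + w) - u t))
          ≤ ∫ _t in (R-w)..R, (w * M / (R - r)) :=
            intervalIntegral.integral_mono_on (by linarith) hIA
              (intervalIntegrable_const) hptwise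
        _ = w * (w * M / (R - r)) := by
            rw [intervalIntegral.integral_const, smul_eq_mul]
            congr 1; ring
    have final : (∫ x in R..b, D x) ≤ w ^ 2 * (M / (R - r)) := by
      rw [compute, ← eA, ← eB]
      have : w * (w * M / (R - r)) = w ^ 2 * (M / (R - r)) := by ring
      linarith [hA, hB, this]
    rw [step1, step2, hC]
    exact ENNReal.ofReal_le_ofReal final
  -- lift to Ioi via iSup
  have hfmeas : Measurable fun x => ENNReal.ofReal (D x) :=
    (ENNReal.measurable_ofReal.comp hDcont.measurable)
  have indic_eq : ∀ x : ℝ, (Set.Ioi R).indicator (fun x => ENNReal.ofReal (D x)) x =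
      ⨆ n : ℕ, (Set.Ioc R (R + n + 1)).indicator (fun x => ENNReal.ofReal (D x)) x := by
    intro x
    by_cases hx : R < x
    · rw [Set.indicator_of_mem (Set.mem_Ioi.2 hx)]
      apply le_antisymm
      · obtain ⟨n, hn⟩ := exists_nat_ge (x - R)
        refine le_trans ?_ (le_iSup _ n)
        rw [Set.indicator_of_mem (Set.mem_Ioc.2 ⟨hx, by linarith⟩)]
      · exact iSup_le fun n => Set.indicator_apply_le fun _ => le_rfl
    · have h1 : x ∉ Set.Ioi R := hx
      rw [Set.indicator_of_notMem h1, eq_comm, ENNReal.iSup_eq_zero]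
      intro n
      apply Set.indicator_of_notMem
      intro hmem
      exact hx hmem.1
  calc ∫⁻ x in Set.Ioi R, ENNReal.ofReal (D x)
      = ∫⁻ x, (Set.Ioi R).indicator (fun x => ENNReal.ofReal (D x)) x := by
        rw [lintegral_indicator measurableSet_Ioi]
    _ = ∫⁻ x, ⨆ n : ℕ, (Set.Ioc R (R + n + 1)).indicator (fun x => ENNReal.ofReal (D x)) x := by
        exact lintegral_congr indic_eq
    _ = ⨆ n : ℕ, ∫⁻ x, (Set.Ioc R (R + n + 1)).indicator (fun x => ENNReal.ofReal (D x)) x := by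
        apply lintegral_iSup
        · exact fun n => hfmeas.indicator measurableSet_Ioc
        · intro n m hnm x
          apply Set.indicator_le_indicator_of_subset
          · apply Set.Ioc_subset_Ioc_right
            have : (n:ℝ) ≤ m := Nat.cast_le.2 hnm
            linarith
          · exact fun _ => zero_le
    _ ≤ C := by
        apply iSup_le
        intro n
        rw [lintegral_indicator measurableSet_Ioc]
        refine hIocBound (R + n + 1) ?_
        have : (0:ℝ) ≤ n := Nat.cast_nonneg n
        linarith
end aux3
section aux4
variable {u : ℝ → ℝ} {M : ℝ}

lemma aux_claimB (hbdd : ∀ x, |u x| ≤ M) (hmono : Monotone u) (hodd : ∀ x, u (-x) = -u x)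
    (hconv : ConvexOn ℝ (Set.Iio 0) u) (hcont : Continuous u)
    {r R : ℝ} (hr : 0 < r) (hR : r < R) (z : ℝ) (hz : |z| ≤ r) :
    ∫⁻ x in Set.Ioi R, ENNReal.ofReal (|2 * u x - u (x + z) - u (x - z)| / z ^ 2) ≤
      ENNReal.ofReal (M / (R - r)) := by
  have hM0 : 0 ≤ M := le_trans (abs_nonneg _) (hbdd 0)
  have hRr : 0 < R - r := by linarith
  rcases eq_or_ne z 0 with hz0 | hz0
  · subst hz0
    simp only [add_zero, sub_zero]
    have : ∀ x : ℝ, |2 * u x - u x - u x| / (0:ℝ) ^ 2 = 0 := by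
      intro x
      rw [show 2 * u x - u x - u x = 0 by ring]
      simp
    simp only [this, ENNReal.ofReal_zero, lintegral_zero]
    exact zero_le
  · set w := |z| with hw
    have hw0 : 0 < w := abs_pos.2 hz0
    have hwr : w ≤ r := hz
    have hw_eq : ∀ x : ℝ, |2 * u x - u (x + z) - u (x - z)| =
        |2 * u x - u (x + w) - u (x - w)| := by
      intro x
      rcases le_or_gt 0 z with hzpos | hzneg
      · rw [hw, abs_of_nonneg hzpos]
      · have hwz : w = -z := by rw [hw, abs_of_neg hzneg]
        have e1 : x + w = x - z := by rw [hwz]; ring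
        have e2 : x - w = x + z := by rw [hwz]; ring
        rw [e1, e2]
        congr 1; ring
    have hz2 : z ^ 2 = w ^ 2 := (sq_abs z).symm
    have hz2pos : (0:ℝ) < z ^ 2 := by positivity
    have key := aux_claimA hbdd hmono hodd hconv hcont hr hR hw0 hwr
    calc ∫⁻ x in Set.Ioi R, ENNReal.ofReal (|2 * u x - u (x + z) - u (x - z)| / z ^ 2)
        = ∫⁻ x in Set.Ioi R,
            ENNReal.ofReal (|2 * u x - u (x + w) - u (x - w)|) * (ENNReal.ofReal (z ^ 2))⁻¹ := by
          apply lintegral_congr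
          intro x
          rw [hw_eq x, ENNReal.ofReal_div_of_pos hz2pos, div_eq_mul_inv]
      _ = (∫⁻ x in Set.Ioi R, ENNReal.ofReal (|2 * u x - u (x + w) - u (x - w)|))
            * (ENNReal.ofReal (z ^ 2))⁻¹ := by
          apply lintegral_mul_const'
          exact ENNReal.inv_ne_top.2 (by simp [ENNReal.ofReal_pos.2 hz2pos]; positivity)
      _ ≤ ENNReal.ofReal (w ^ 2 * (M / (R - r))) * (ENNReal.ofReal (z ^ 2))⁻¹ :=
          mul_le_mul_left key _
      _ = ENNReal.ofReal (M / (R - r)) := by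
          rw [hz2, ENNReal.ofReal_mul (by positivity)]
          rw [mul_comm (ENNReal.ofReal (w ^ 2)), mul_assoc, ENNReal.mul_inv_cancel, mul_one]
          · simp [ENNReal.ofReal_pos.2 (by positivity : (0:ℝ) < w ^ 2)]
            positivity
          · exact ENNReal.ofReal_ne_top
end aux4
theorem stmt_12 (u : ℝ → ℝ) (M : ℝ)
    (hbdd : ∀ x, |u x| ≤ M) (hmono : Monotone u) (hodd : ∀ x, u (-x) = -u x)
    (hconv : ConvexOn ℝ (Set.Iio 0) u) (hcont : Continuous u)
    (r R : ℝ) (hr : 0 < r) (hR : r < R) :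
    ∫ x in {x : ℝ | R < |x|},
        ∫ z in {z : ℝ | |z| ≤ r}, |u (x + z) - u x - deriv u x * z| / z ^ 2
      ≤ 4 * r * M / (R - r) := by
  have hM0 : 0 ≤ M := le_trans (abs_nonneg _) (hbdd 0)
  have hRr : 0 < R - r := by linarith
  have hRHS0 : 0 ≤ 4 * r * M / (R - r) := by positivity
  set S : Set ℝ := {x : ℝ | R < |x|} with hS
  set T : Set ℝ := {z : ℝ | |z| ≤ r} with hT
  have hTIcc : T = Set.Icc (-r) r := by ext z; simp [hT, abs_le, Set.mem_setOf_eq]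
  have hSm : MeasurableSet S := (isOpen_lt continuous_const continuous_abs).measurableSet
  have hTm : MeasurableSet T := by rw [hTIcc]; exact measurableSet_Icc
  have hgm : Measurable
      (fun p : ℝ × ℝ => |u (p.1 + p.2) - u p.1 - deriv u p.1 * p.2| / p.2 ^ 2) := by
    apply Measurable.div
    · apply Measurable.abs
      apply Measurable.sub
      · apply Measurable.sub
        · exact (hcont.comp (continuous_fst.add continuous_snd)).measurable
        · exact hcont.measurable.comp measurable_fst
      · exact ((measurable_deriv u).comp measurable_fst).mul measurable_snd
    · exact measurable_snd.pow measurable_const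
  have hGm : Measurable (fun p : ℝ × ℝ =>
      ENNReal.ofReal (|2 * u p.1 - u (p.1 + p.2) - u (p.1 - p.2)| / p.2 ^ 2)) := by
    apply ENNReal.measurable_ofReal.comp
    apply Measurable.div
    · apply Measurable.abs
      apply Measurable.sub
      · apply Measurable.sub
        · exact (measurable_const.mul (hcont.measurable.comp measurable_fst))
        · exact (hcont.comp (continuous_fst.add continuous_snd)).measurable
      · exact (hcont.comp (continuous_fst.sub continuous_snd)).measurable
    · exact measurable_snd.pow measurable_const
  set G : ℝ → ENNReal := fun x =>
    ∫⁻ z in T, ENNReal.ofReal (|2 * u x - u (x + z) - u (x - z)| / z ^ 2) with hG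
  have hGmeas : Measurable G :=
    Measurable.lintegral_prod_right (ν := volume.restrict T)
      (f := fun x z => ENNReal.ofReal (|2 * u x - u (x + z) - u (x - z)| / z ^ 2)) hGm
  set F : ℝ → ℝ := fun x => ∫ z in T, |u (x + z) - u x - deriv u x * z| / z ^ 2 with hF
  have hFnn : ∀ x, 0 ≤ F x := fun x => integral_nonneg fun z => by positivity
  have hFsm : StronglyMeasurable F :=
    MeasureTheory.StronglyMeasurable.integral_prod_right' (ν := volume.restrict T)
      hgm.stronglyMeasurable
  have h1 : ∫ x in S, F x = (∫⁻ x in S, ENNReal.ofReal (F x)).toReal :=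
    integral_eq_lintegral_of_nonneg_ae (ae_of_all _ hFnn) hFsm.aestronglyMeasurable
  show ∫ x in S, F x ≤ 4 * r * M / (R - r)
  rw [h1]
  apply ENNReal.toReal_le_of_le_ofReal hRHS0
  have hae1 : ∀ᵐ x : ℝ, DifferentiableAt ℝ u x := hmono.ae_differentiableAt
  have hqmp := (Measure.measurePreserving_neg (volume : Measure ℝ)).quasiMeasurePreserving
  have hae2 : ∀ᵐ x : ℝ, DifferentiableAt ℝ u (-x) := hqmp.ae hae1
  calc ∫⁻ x in S, ENNReal.ofReal (F x)
      ≤ ∫⁻ x in S,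
          ∫⁻ z in T, ENNReal.ofReal (|u (x + z) - u x - deriv u x * z| / z ^ 2) := by
        apply lintegral_mono
        intro x
        have hx : F x = (∫⁻ z in T,
            ENNReal.ofReal (|u (x + z) - u x - deriv u x * z| / z ^ 2)).toReal :=
          integral_eq_lintegral_of_nonneg_ae (ae_of_all _ fun z => by positivity)
            ((hgm.comp measurable_prodMk_left).stronglyMeasurable).aestronglyMeasurable
        show ENNReal.ofReal (F x) ≤
          ∫⁻ z in T, ENNReal.ofReal (|u (x + z) - u x - deriv u x * z| / z ^ 2)
        rw [hx]
        exact ENNReal.ofReal_toReal_le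
    _ ≤ ∫⁻ x in S, G x := by
        apply lintegral_mono_ae
        filter_upwards [ae_restrict_of_ae hae1, ae_restrict_of_ae hae2, ae_restrict_mem hSm]
          with x h1' h2' hxS
        apply lintegral_mono_ae
        filter_upwards [ae_restrict_mem hTm] with z hzT
        apply ENNReal.ofReal_le_ofReal
        have hzr : |z| ≤ r := hzT
        rcases eq_or_ne z 0 with rfl | hz0
        · have e0 : |u (x + 0) - u x - deriv u x * 0| = 0 := by simp
          rw [e0, zero_div]
          positivity
        · rw [div_le_div_iff_of_pos_right (by positivity : (0:ℝ) < z ^ 2)]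
          have hxS' : R < |x| := hxS
          rcases lt_abs.1 hxS' with hxp | hxn
          · calc |u (x + z) - u x - deriv u x * z|
                ≤ 2 * u x - u (x + z) - u (x - z) :=
                  aux_bound_pos hodd hconv hzr (by linarith : r < x) h1'
              _ ≤ |2 * u x - u (x + z) - u (x - z)| := le_abs_self _
          · exact aux_bound_neg hodd hconv hzr (by linarith : x < -r) h2'
    _ = (∫⁻ x in Set.Iio (-R), G x) + (∫⁻ x in Set.Ioi R, G x) := by
        have hSeq : S = Set.Iio (-R) ∪ Set.Ioi R := by
          ext x
          simp only [hS, Set.mem_setOf_eq, Set.mem_union, Set.mem_Iio, Set.mem_Ioi, lt_abs]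
          constructor
          · rintro (h | h)
            · exact Or.inr h
            · exact Or.inl (by linarith)
          · rintro (h | h)
            · exact Or.inr (by linarith)
            · exact Or.inl h
        rw [hSeq]
        apply lintegral_union measurableSet_Ioi
        rw [Set.disjoint_left]
        intro x hx hx'
        simp only [Set.mem_Iio] at hx
        simp only [Set.mem_Ioi] at hx'
        linarith
    _ = 2 * ∫⁻ x in Set.Ioi R, G x := by
        have hpre : (fun x : ℝ => -x) ⁻¹' Set.Iio (-R) = Set.Ioi R := by
          ext x
          simp only [Set.mem_preimage, Set.mem_Iio, Set.mem_Ioi]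
          constructor <;> intro h <;> linarith
        have hnegint : ∫⁻ x in Set.Iio (-R), G x = ∫⁻ x in Set.Ioi R, G x := by
          calc ∫⁻ x in Set.Iio (-R), G x
              = ∫⁻ x in (fun x : ℝ => -x) ⁻¹' Set.Iio (-R), G (-x) :=
              ((Measure.measurePreserving_neg (volume : Measure ℝ)).setLIntegral_comp_preimage
                measurableSet_Iio hGmeas).symm
            _ = ∫⁻ x in Set.Ioi R, G (-x) := by rw [hpre]
            _ = ∫⁻ x in Set.Ioi R, G x := by
                apply lintegral_congr
                intro x
                apply lintegral_congr
                intro z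
                congr 1
                have e1 : u (-x) = -u x := hodd x
                have e2 : u (-x + z) = -u (x - z) := by
                  rw [show -x + z = -(x - z) by ring, hodd]
                have e3 : u (-x - z) = -u (x + z) := by
                  rw [show -x - z = -(x + z) by ring, hodd]
                rw [e1, e2, e3]
                congr 1
                rw [← abs_neg]
                congr 1
                ring
        rw [hnegint, two_mul]
    _ ≤ 2 * ENNReal.ofReal (2 * r * M / (R - r)) := by
        apply mul_le_mul_right
        have hswap : (∫⁻ x in Set.Ioi R, G x) = ∫⁻ z in T, ∫⁻ x in Set.Ioi R,
            ENNReal.ofReal (|2 * u x - u (x + z) - u (x - z)| / z ^ 2) :=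
          lintegral_lintegral_swap (μ := volume.restrict (Set.Ioi R))
            (ν := volume.restrict T)
            (f := fun x z => ENNReal.ofReal (|2 * u x - u (x + z) - u (x - z)| / z ^ 2))
            hGm.aemeasurable
        rw [hswap]
        calc (∫⁻ z in T, ∫⁻ x in Set.Ioi R,
              ENNReal.ofReal (|2 * u x - u (x + z) - u (x - z)| / z ^ 2))
            ≤ ∫⁻ _z in T, ENNReal.ofReal (M / (R - r)) := by
              apply lintegral_mono_ae
              filter_upwards [ae_restrict_mem hTm] with z hzT
              exact aux_claimB hbdd hmono hodd hconv hcont hr hR z hzT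
          _ = ENNReal.ofReal (M / (R - r)) * volume T := setLIntegral_const T _
          _ = ENNReal.ofReal (2 * r * M / (R - r)) := by
              rw [hTIcc, Real.volume_Icc, ← ENNReal.ofReal_mul (by positivity)]
              congr 1
              field_simp
              ring
    _ = ENNReal.ofReal (4 * r * M / (R - r)) := by
        rw [two_mul, ← ENNReal.ofReal_add (by positivity) (by positivity)]
        congr 1
        field_simp
        ring
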